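/- Let A be an n×n complex matrix and let e, f be n×n complex matrices with e^2 = e and f^2 = f. If (e A f)^i = e A^i f for all integers i ≥ 1, then the Drazin inverse of e A f is (e A f)^d = e A^d f, where A^d is the Drazin inverse of A. -/

import Mathlib

open Matrix Finset

/-- `X` is the Drazin inverse of `A`: `A X = X A`, `X A X = X`, and
`A^(k+1) X = A^k` for some (hence all sufficiently large) `k`. -/
def IsDrazinInverse {ι : Type*} [Fintype ι] [DecidableEq ι]
    (A X : Matrix ι ι ℂ) : Prop :=
  A * X = X * A ∧ X * A * X = X ∧ ∃ k : ℕ, A ^ (k + 1) * X = A ^ k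

open Polynomial in
/-- From Cayley–Hamilton: there is a polynomial `q` with `A^(s+1) * q(A) = A^s`. -/
lemma exists_poly_pow {d : ℕ} (A : Matrix (Fin d) (Fin d) ℂ) :
    ∃ (s : ℕ) (q : ℂ[X]), A ^ (s + 1) * aeval A q = A ^ s := by
  have hχ : A.charpoly ≠ 0 := A.charpoly_monic.ne_zero
  obtain ⟨g, hg, hnd⟩ :=
    Polynomial.exists_eq_pow_rootMultiplicity_mul_and_not_dvd A.charpoly hχ 0
  set s := Polynomial.rootMultiplicity 0 A.charpoly with hs
  have hc : g.eval 0 ≠ 0 := by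
    intro h0
    exact hnd (Polynomial.dvd_iff_isRoot.mpr (by simpa using h0))
  set c : ℂ := g.eval 0 with hcdef
  -- g = X * g.divX + C c
  have hgdec : g = X * g.divX + C c := by
    rw [hcdef, ← Polynomial.coeff_zero_eq_eval_zero]
    exact (Polynomial.X_mul_divX_add g).symm
  have hCH : aeval A A.charpoly = 0 := A.aeval_self_charpoly
  rw [hg] at hCH
  simp only [_root_.map_mul, map_pow, map_sub, Polynomial.aeval_X, Polynomial.aeval_C, map_zero,
    sub_zero] at hCH
  -- A^s * (A * divX g (A) + c • 1) = 0
  rw [hgdec] at hCH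
  simp only [map_add, _root_.map_mul, Polynomial.aeval_X, Polynomial.aeval_C,
    Algebra.algebraMap_eq_smul_one] at hCH
  refine ⟨s, (-c⁻¹) • g.divX, ?_⟩
  have h1 : A ^ s * (A * aeval A g.divX) = -(c • A ^ s) := by
    have := hCH
    rw [mul_add] at this
    have : A ^ s * (A * aeval A g.divX) + A ^ s * (c • 1) = 0 := this
    rw [eq_neg_iff_add_eq_zero]
    simpa [mul_smul_comm] using this
  rw [_root_.map_smul, mul_smul_comm]
  have h2 : A ^ (s + 1) * Polynomial.aeval A g.divX = -(c • A ^ s) := by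
    rw [pow_succ, mul_assoc]
    exact h1
  rw [h2, smul_neg, smul_smul, neg_mul, inv_mul_cancel₀ hc]
  simp

theorem stmt_4 {d : ℕ} (A e f Ad : Matrix (Fin d) (Fin d) ℂ)
    (he : e ^ 2 = e) (hf : f ^ 2 = f)
    (hAd : IsDrazinInverse A Ad)
    (hpow : ∀ i : ℕ, 1 ≤ i → (e * A * f) ^ i = e * A ^ i * f) :
    IsDrazinInverse (e * A * f) (e * Ad * f) := by
  classical
  open Polynomial in
  obtain ⟨h1, h2, k, h3⟩ := hAd
  have hc : Commute A Ad := h1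
  set B := e * A * f with hB
  -- Step 1: Ad is a polynomial in A with zero constant term.
  obtain ⟨s, q, hq⟩ := exists_poly_pow A
  set Q := Polynomial.aeval A q with hQdef
  have hcQ : Commute A Q := by
    have := congrArg (Polynomial.aeval A) (mul_comm Polynomial.X q)
    exact (show A * Q = Q * A by simpa [_root_.map_mul] using this)
  set M := max s k with hM
  set N := M + 1 with hN
  -- A^(N+1) * Q = A^N
  have hQN : A ^ (N + 1) * Q = A ^ N := by
    have hsN : s ≤ N := le_trans (le_max_left s k) (Nat.le_succ_of_le le_rfl)
    obtain ⟨t, ht⟩ := Nat.exists_eq_add_of_le hsN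
    rw [ht, show s + t + 1 = t + (s + 1) by ring, pow_add, mul_assoc, hq, ← pow_add,
      show t + s = s + t by ring]
  -- A^(N+m) * Q^m = A^N
  have hQm : ∀ m : ℕ, A ^ (N + m) * Q ^ m = A ^ N := by
    intro m
    induction m with
    | zero => simp
    | succ m ih =>
      rw [show N + (m + 1) = m + (N + 1) by ring, pow_add, pow_succ' Q,
        mul_assoc, ← mul_assoc (A ^ (N+1)) Q, hQN, ← mul_assoc, ← pow_add,
        show m + N = N + m by ring, ih]
  -- A^(m+1) * Ad = A^m for m ≥ k
  have hA3 : ∀ j : ℕ, A ^ (k + j + 1) * Ad = A ^ (k + j) := by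
    intro j
    induction j with
    | zero => simpa using h3
    | succ j ih =>
      rw [show k + (j+1) + 1 = (k + j + 1) + 1 by ring, pow_succ',
        mul_assoc, ih, ← pow_succ', show k + j + 1 = k + (j + 1) by ring]
  have hA3' : A ^ (N + 1) * Ad = A ^ N := by
    have hkN : k ≤ N := le_trans (le_max_right s k) (Nat.le_succ_of_le le_rfl)
    obtain ⟨t, ht⟩ := Nat.exists_eq_add_of_le hkN
    rw [ht]
    simpa [show k + t + 1 = k + t + 1 by ring] using hA3 t
  -- Ad = Ad^(m+1) * A^m
  have key : ∀ m : ℕ, Ad ^ (m + 1) * A ^ m = Ad := by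
    intro m
    induction m with
    | zero => simp
    | succ m ih =>
      have hAm : Ad * A ^ m = A ^ m * Ad := (hc.pow_left m).symm.eq
      have e1 : Ad ^ (m + 1 + 1) * A ^ (m + 1) = Ad ^ (m + 1) * A ^ m * (Ad * A) := by
        rw [pow_succ Ad (m + 1), pow_succ A m]
        simp only [mul_assoc]
        rw [← mul_assoc Ad (A ^ m) A, hAm, mul_assoc]
      rw [e1, ih, ← hc.eq, ← mul_assoc, h2]
  -- idempotent E = A * Ad
  have hE : (A * Ad) * (A * Ad) = A * Ad := by
    calc (A * Ad) * (A * Ad) = A * (Ad * (A * Ad)) := by simp only [mul_assoc]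
      _ = A * (Ad * A * Ad) := by rw [mul_assoc (Ad) A Ad]
      _ = A * Ad := by rw [h2]
  have hEpow : ∀ m : ℕ, (A * Ad) ^ (m + 1) = A * Ad := by
    intro m
    induction m with
    | zero => simp
    | succ m ih => rw [pow_succ, ih, hE]
  -- Ad = A^N * Q^(N+1)
  have hAdpoly : Ad = A ^ N * Q ^ (N + 1) := by
    have e2 : A ^ N = A ^ ((N + 1) + N) * Q ^ (N + 1) := by
      rw [show (N + 1) + N = N + (N + 1) by ring]
      exact (hQm (N + 1)).symm
    calc Ad = Ad ^ (N + 1) * A ^ N := (key N).symm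
      _ = Ad ^ (N + 1) * (A ^ ((N + 1) + N) * Q ^ (N + 1)) := by rw [← e2]
      _ = Ad ^ (N + 1) * (A ^ (N + 1) * A ^ N * Q ^ (N + 1)) := by
          rw [pow_add A (N + 1) N]
      _ = (Ad ^ (N + 1) * A ^ (N + 1)) * A ^ N * Q ^ (N + 1) := by
          simp only [mul_assoc]
      _ = (A * Ad) ^ (N + 1) * A ^ N * Q ^ (N + 1) := by
          rw [hc.mul_pow, (hc.pow_pow (N + 1) (N + 1)).eq]
      _ = (A * Ad) * A ^ N * Q ^ (N + 1) := by rw [hEpow N]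
      _ = (A ^ (N + 1) * Ad) * Q ^ (N + 1) := by
          rw [mul_assoc A Ad (A ^ N), (hc.pow_left N).symm.eq, ← mul_assoc, ← pow_succ']
      _ = A ^ N * Q ^ (N + 1) := by rw [hA3']
  -- So Ad = aeval A (X * p) for p = X^M * q^(N+1)
  set p : Polynomial ℂ := Polynomial.X ^ M * q ^ (N + 1) with hp
  set P : Polynomial ℂ := Polynomial.X * p with hP
  have hAdP : Polynomial.aeval A P = Ad := by
    rw [hP, hp, ← mul_assoc, ← pow_succ']
    rw [_root_.map_mul, _root_.map_pow, _root_.map_pow, Polynomial.aeval_X, ← hQdef, ← hN]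
    exact hAdpoly.symm
  -- push lemma
  have push : ∀ r : Polynomial ℂ,
      e * Polynomial.aeval A (Polynomial.X * r) * f = Polynomial.aeval B (Polynomial.X * r) := by
    intro r
    induction r using Polynomial.induction_on' with
    | add u v hu hv =>
      rw [mul_add, map_add, map_add, mul_add, add_mul, hu, hv]
    | monomial n a =>
      rw [Polynomial.X_mul_monomial]
      rw [Polynomial.aeval_monomial, Polynomial.aeval_monomial,
        Algebra.algebraMap_eq_smul_one, smul_mul_assoc, one_mul, smul_mul_assoc, one_mul,
        mul_smul_comm, smul_mul_assoc]
      rw [hpow (n + 1) (Nat.succ_le_succ (Nat.zero_le n))]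
  have hS : e * Ad * f = Polynomial.aeval B P := by
    rw [← hAdP, hP]
    exact push p
  refine ⟨?_, ?_, ⟨k + 1, ?_⟩⟩
  · -- commutation
    rw [hS]
    have := congrArg (Polynomial.aeval B) (mul_comm Polynomial.X P)
    simpa [_root_.map_mul, hB] using this
  · -- S * B * S = S
    rw [hS]
    have e1 : Polynomial.aeval B P * B * Polynomial.aeval B P
        = Polynomial.aeval B (Polynomial.X * (p * Polynomial.X * P)) := by
      rw [show Polynomial.X * (p * Polynomial.X * P) = P * Polynomial.X * P by rw [hP]; ring]
      simp [_root_.map_mul]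
    rw [e1, ← push]
    have e2 : Polynomial.aeval A (Polynomial.X * (p * Polynomial.X * P))
        = Ad * A * Ad := by
      rw [show Polynomial.X * (p * Polynomial.X * P) = P * Polynomial.X * P by rw [hP]; ring]
      simp [_root_.map_mul, hAdP]
    rw [e2, h2, hS]
  · -- B^(k+2) * S = B^(k+1)
    rw [hS]
    have e1 : B ^ (k + 1 + 1) * Polynomial.aeval B P
        = Polynomial.aeval B (Polynomial.X * (Polynomial.X ^ (k + 1) * P)) := by
      rw [show Polynomial.X * (Polynomial.X ^ (k+1) * P)
          = Polynomial.X ^ (k + 1 + 1) * P by ring]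
      simp [_root_.map_mul, _root_.map_pow]
    rw [e1, ← push]
    have e2 : Polynomial.aeval A (Polynomial.X * (Polynomial.X ^ (k + 1) * P))
        = A ^ (k + 1 + 1) * Ad := by
      rw [show Polynomial.X * (Polynomial.X ^ (k+1) * P)
          = Polynomial.X ^ (k + 1 + 1) * P by ring]
      simp [_root_.map_mul, _root_.map_pow, hAdP]
    have e3 : A ^ (k + 1 + 1) * Ad = A ^ (k + 1) := by simpa using hA3 1
    rw [e2, e3]
    exact (hpow (k + 1) (Nat.succ_le_succ (Nat.zero_le k))).symm
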